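/- There exist a topologically regular compact set K ⊆ ℝ² and a continuous function F : K → ℝ such that F is differentiable at every point of int(K) with derivative 0 (so F ∈ C¹_int(K), its interior derivative extending continuously by 0 to K), yet F admits no continuous derivative on K, i.e., F ∉ C¹(K). In particular, the inclusion C¹(K) ⊆ C¹_int(K) can be strict. -/

import Mathlib

open Set Filter Topology MeasureTheory
open scoped NNReal ENNReal

noncomputable section

/-- `df` is a (not necessarily unique) derivative of `f` on the set `K`:
at every `x ∈ K`, `(f y - f x - ⟪df x, y - x⟫)/‖y - x‖ → 0` as `y → x` within `K`. -/
def IsDerivOn {d : ℕ} (K : Set (EuclideanSpace ℝ (Fin d)))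
    (f : EuclideanSpace ℝ (Fin d) → ℝ)
    (df : EuclideanSpace ℝ (Fin d) → EuclideanSpace ℝ (Fin d)) : Prop :=
  ∀ x ∈ K, Filter.Tendsto
    (fun y => (f y - f x - (inner ℝ (df x) (y - x) : ℝ)) / ‖y - x‖)
    (𝓝[K \ {x}] x) (𝓝 0)

namespace SauterAux

def a (n : ℕ) : ℝ := (1/4 : ℝ) ^ (n + 1)

lemma a_pos (n : ℕ) : 0 < a n := by unfold a; positivity

lemma a_antitone {m n : ℕ} (h : m ≤ n) : a n ≤ a m :=
  pow_le_pow_of_le_one (by norm_num) (by norm_num) (by omega)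

lemma a_tendsto : Tendsto a atTop (𝓝 0) := by
  have h1 : Tendsto (fun k : ℕ => (1/4 : ℝ) ^ k) atTop (𝓝 0) :=
    tendsto_pow_atTop_nhds_zero_of_lt_one (by norm_num) (by norm_num)
  exact h1.comp (tendsto_add_atTop_nat 1)

/-- Open interval around the `n`-th square slice. -/
def J (n : ℕ) : Set ℝ := Ioo (3/4 * a n) (3 * a n)

/-- The `n`-th closed slice. -/
def I' (n : ℕ) : Set ℝ := Icc (a n) (2 * a n)

lemma I'_subset_J (n : ℕ) : I' n ⊆ J n := by
  intro t ht
  have h := a_pos n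
  exact ⟨by nlinarith [ht.1], by nlinarith [ht.2]⟩

lemma mem_J_unique {m n : ℕ} {t : ℝ} (hm : t ∈ J m) (hn : t ∈ J n) : m = n := by
  by_contra h
  rcases Nat.lt_or_ge m n with hlt | hge
  · have : a n ≤ a (m + 1) := a_antitone hlt
    have ham : a (m+1) = a m * (1/4) := by simp [a, pow_succ]
    have := hm.1; have := hn.2; have := a_pos m
    nlinarith
  · have hlt : n < m := lt_of_le_of_ne hge (Ne.symm h)
    have : a m ≤ a (n + 1) := a_antitone hlt
    have han : a (n+1) = a n * (1/4) := by simp [a, pow_succ]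
    have := hn.1; have := hm.2; have := a_pos n
    nlinarith

open Classical in
def φ (t : ℝ) : ℝ := if h : ∃ n, t ∈ J n then a h.choose else 0

lemma φ_eq {n : ℕ} {t : ℝ} (ht : t ∈ J n) : φ t = a n := by
  have h : ∃ m, t ∈ J m := ⟨n, ht⟩
  unfold φ
  rw [dif_pos h]
  exact congrArg a (mem_J_unique h.choose_spec ht)

lemma φ_zero : φ 0 = 0 := by
  unfold φ
  rw [dif_neg]
  rintro ⟨n, hn⟩
  have := a_pos n
  have := hn.1
  linarith

def C : Set ℝ := {0} ∪ ⋃ n, I' n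

lemma C_closed : IsClosed C := by
  have hC : C = ⋂ m, (Icc 0 (2 * a m) ∪ ⋃ n ∈ Finset.range m, I' n) := by
    ext t
    constructor
    · intro htC
      simp only [mem_iInter]
      intro m
      rcases htC with h | h
      · simp only [mem_singleton_iff] at h
        subst h
        exact Or.inl ⟨le_rfl, by linarith [a_pos m]⟩
      · rcases mem_iUnion.mp h with ⟨n, hn⟩
        rcases Nat.lt_or_ge n m with hlt | hge
        · exact Or.inr (mem_biUnion (Finset.mem_range.mpr hlt) hn)
        · exact Or.inl ⟨le_trans (a_pos n).le hn.1,
            le_trans hn.2 (by linarith [a_antitone hge])⟩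
    · intro ht
      simp only [mem_iInter] at ht
      rcases eq_or_lt_of_le (show (0:ℝ) ≤ t by
        rcases ht 0 with h | h
        · exact h.1
        · simpa using h) with h0 | hpos
      · exact Or.inl (by simp [← h0])
      · obtain ⟨m, hm⟩ : ∃ m, 2 * a m < t := by
          have := a_tendsto
          have h2 : Tendsto (fun n => 2 * a n) atTop (𝓝 (2 * 0)) := this.const_mul 2
          rw [mul_zero] at h2
          rcases (h2.eventually (eventually_lt_nhds hpos)).exists with ⟨m, hm⟩
          exact ⟨m, hm⟩
        rcases ht m with h | h
        · exact absurd h.2 (not_le.mpr hm)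
        · rcases mem_iUnion₂.mp h with ⟨n, _, hn⟩
          exact Or.inr (mem_iUnion.mpr ⟨n, hn⟩)
  rw [hC]
  refine isClosed_iInter fun m => IsClosed.union isClosed_Icc ?_
  exact isClosed_biUnion_finset fun n _ => isClosed_Icc

def K : Set (EuclideanSpace ℝ (Fin 2)) := {x | x 0 ∈ C ∧ x 1 ∈ Icc 0 (x 0 / 2)}

def F (x : EuclideanSpace ℝ (Fin 2)) : ℝ := φ (x 0)

def pt (s t : ℝ) : EuclideanSpace ℝ (Fin 2) := (WithLp.equiv 2 (Fin 2 → ℝ)).symm ![s, t]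

lemma pt_apply0 (s t : ℝ) : pt s t 0 = s := rfl
lemma pt_apply1 (s t : ℝ) : pt s t 1 = t := rfl

lemma pt_norm (s t : ℝ) : ‖pt s t‖ = Real.sqrt (s^2 + t^2) := by
  rw [EuclideanSpace.norm_eq]
  simp [pt, Fin.sum_univ_two, sq_abs]

lemma cont0 : Continuous fun x : EuclideanSpace ℝ (Fin 2) => x 0 :=
  (continuous_apply 0).comp (PiLp.continuous_ofLp 2 _)
lemma cont1 : Continuous fun x : EuclideanSpace ℝ (Fin 2) => x 1 :=
  (continuous_apply 1).comp (PiLp.continuous_ofLp 2 _)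

lemma K_closed : IsClosed K := by
  have h1 : IsClosed {x : EuclideanSpace ℝ (Fin 2) | x 0 ∈ C} := C_closed.preimage cont0
  have h2 : IsClosed {x : EuclideanSpace ℝ (Fin 2) | 0 ≤ x 1} :=
    isClosed_le continuous_const cont1
  have h3 : IsClosed {x : EuclideanSpace ℝ (Fin 2) | x 1 ≤ x 0 / 2} :=
    isClosed_le cont1 (cont0.div_const 2)
  have : K = {x : EuclideanSpace ℝ (Fin 2) | x 0 ∈ C} ∩
      ({x | 0 ≤ x 1} ∩ {x | x 1 ≤ x 0 / 2}) := by
    ext x; simp [K, mem_Icc, and_assoc]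
  rw [this]
  exact h1.inter (h2.inter h3)

lemma C_nonneg {t : ℝ} (ht : t ∈ C) : 0 ≤ t := by
  rcases ht with h | h
  · simp only [mem_singleton_iff] at h
    exact le_of_eq h.symm
  · rcases mem_iUnion.mp h with ⟨n, hn⟩
    exact le_trans (a_pos n).le hn.1

lemma C_le {t : ℝ} (ht : t ∈ C) : t ≤ 1 := by
  rcases ht with h | h
  · simp_all
  · rcases mem_iUnion.mp h with ⟨n, hn⟩
    have h1 : a n ≤ a 0 := a_antitone (Nat.zero_le n)
    have : a 0 = 1/4 := by norm_num [a]
    linarith [hn.2]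

lemma K_compact : IsCompact K := by
  apply Metric.isCompact_of_isClosed_isBounded K_closed
  apply (Metric.isBounded_closedBall (x := (0 : EuclideanSpace ℝ (Fin 2))) (r := 2)).subset
  intro x hx
  have h0 := hx.1
  have h1 := hx.2
  have hx0 : 0 ≤ x 0 := C_nonneg h0
  have hx0' : x 0 ≤ 1 := C_le h0
  have hx1 : 0 ≤ x 1 := h1.1
  have hx1' : x 1 ≤ 1 := le_trans h1.2 (by linarith)
  simp only [Metric.mem_closedBall, dist_zero_right]
  rw [EuclideanSpace.norm_eq]
  have : Real.sqrt (‖x 0‖^2 + ‖x 1‖^2) ≤ Real.sqrt 4 := by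
    apply Real.sqrt_le_sqrt
    rw [Real.norm_eq_abs, Real.norm_eq_abs, sq_abs, sq_abs]
    nlinarith
  calc Real.sqrt (∑ i, ‖x i‖^2) = Real.sqrt (‖x 0‖^2 + ‖x 1‖^2) := by
        rw [Fin.sum_univ_two]
    _ ≤ Real.sqrt 4 := this
    _ = 2 := by
        rw [show (4:ℝ) = 2^2 by norm_num, Real.sqrt_sq (by norm_num)]

/-- the open trapezoid over the `n`-th slice -/
def V (n : ℕ) : Set (EuclideanSpace ℝ (Fin 2)) :=
  {x | a n < x 0 ∧ x 0 < 2 * a n ∧ 0 < x 1 ∧ x 1 < x 0 / 2}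

lemma V_open (n : ℕ) : IsOpen (V n) := by
  have h1 : IsOpen {x : EuclideanSpace ℝ (Fin 2) | a n < x 0} :=
    isOpen_lt continuous_const cont0
  have h2 : IsOpen {x : EuclideanSpace ℝ (Fin 2) | x 0 < 2 * a n} :=
    isOpen_lt cont0 continuous_const
  have h3 : IsOpen {x : EuclideanSpace ℝ (Fin 2) | 0 < x 1} :=
    isOpen_lt continuous_const cont1
  have h4 : IsOpen {x : EuclideanSpace ℝ (Fin 2) | x 1 < x 0 / 2} :=
    isOpen_lt cont1 (cont0.div_const 2)
  have : V n = {x : EuclideanSpace ℝ (Fin 2) | a n < x 0} ∩ ({x | x 0 < 2 * a n} ∩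
      ({x | 0 < x 1} ∩ {x | x 1 < x 0 / 2})) := by
    ext x; simp [V, and_assoc]
  rw [this]
  exact h1.inter (h2.inter (h3.inter h4))

lemma V_subset_K (n : ℕ) : V n ⊆ K := by
  rintro x ⟨h1, h2, h3, h4⟩
  refine ⟨Or.inr (mem_iUnion.mpr ⟨n, h1.le, h2.le⟩), h3.le, h4.le⟩

lemma V_subset_interior (n : ℕ) : V n ⊆ interior K :=
  (V_open n).subset_interior_iff.mpr (V_subset_K n)

/-- center of the `n`-th trapezoid -/
def c (n : ℕ) : EuclideanSpace ℝ (Fin 2) := pt (3/2 * a n) (3/8 * a n)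

lemma c_mem_V (n : ℕ) : c n ∈ V n := by
  have := a_pos n
  refine ⟨?_, ?_, ?_, ?_⟩ <;> simp only [c, pt_apply0, pt_apply1] <;> nlinarith

lemma c_tendsto : Tendsto c atTop (𝓝 0) := by
  have : Tendsto (fun n => ‖c n - 0‖) atTop (𝓝 0) := by
    have heq : ∀ n, ‖c n - 0‖ = Real.sqrt ((3/2)^2 + (3/8)^2) * a n := by
      intro n
      rw [sub_zero]
      have hcn : c n = pt (3/2 * a n) (3/8 * a n) := rfl
      rw [hcn, pt_norm,
        show (3/2 * a n)^2 + (3/8 * a n)^2 = ((3/2)^2 + (3/8)^2) * (a n)^2 by ring,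
        Real.sqrt_mul (by positivity), Real.sqrt_sq (a_pos n).le]
    simp only [heq]
    have := a_tendsto.const_mul (Real.sqrt ((3/2)^2 + (3/8)^2))
    simpa using this
  rwa [← tendsto_iff_norm_sub_tendsto_zero] at this
  
lemma seg_mem_V {n : ℕ} (x : EuclideanSpace ℝ (Fin 2)) (hx : x ∈ K)
    (hx0 : x 0 ∈ I' n) {t : ℝ} (ht : t ∈ Ioo (0:ℝ) 1) :
    x + t • (c n - x) ∈ V n := by
  have han := a_pos n
  have h1 : x 0 ∈ Icc (a n) (2 * a n) := hx0
  have h2 := hx.2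
  obtain ⟨ht0, ht1⟩ := ht
  have e0 : (x + t • (c n - x)) 0 = x 0 + t * (3/2 * a n - x 0) := by
    simp [PiLp.add_apply, PiLp.smul_apply, PiLp.sub_apply, c, pt_apply0, smul_eq_mul]
  have e1 : (x + t • (c n - x)) 1 = x 1 + t * (3/8 * a n - x 1) := by
    simp [PiLp.add_apply, PiLp.smul_apply, PiLp.sub_apply, c, pt_apply1, smul_eq_mul]
  refine ⟨?_, ?_, ?_, ?_⟩
  · rw [e0]; nlinarith [h1.1, h1.2]
  · rw [e0]; nlinarith [h1.1, h1.2]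
  · rw [e1]; nlinarith [h2.1, h2.2, h1.1, h1.2]
  · rw [e0, e1]; nlinarith [h2.1, h2.2, h1.1, h1.2]

lemma mem_closure_V {n : ℕ} (x : EuclideanSpace ℝ (Fin 2)) (hx : x ∈ K)
    (hx0 : x 0 ∈ I' n) : x ∈ closure (V n) := by
  have hcont : Tendsto (fun t : ℝ => x + t • (c n - x)) (𝓝[>] (0:ℝ)) (𝓝 x) := by
    have hc : Continuous (fun t : ℝ => x + t • (c n - x)) := by continuity
    have h := (hc.tendsto 0).mono_left (nhdsWithin_le_nhds (s := Ioi (0:ℝ)))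
    simpa using h
  apply mem_closure_of_tendsto hcont
  filter_upwards [Ioo_mem_nhdsGT_of_mem (Set.mem_Ico.mpr ⟨le_rfl, zero_lt_one⟩)] with t ht
  exact seg_mem_V x hx hx0 ht

lemma zero_mem_K : (0 : EuclideanSpace ℝ (Fin 2)) ∈ K := by
  constructor
  · exact Or.inl rfl
  · constructor <;> simp

lemma K_regular : K = closure (interior K) := by
  apply le_antisymm
  · intro x hx
    rcases hx.1 with h0 | h0
    · -- x = 0
      have hx0 : x 0 = 0 := h0
      have hx1 : x 1 = 0 := by
        have h := hx.2
        rw [hx0] at h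
        simpa using le_antisymm (by simpa using h.2) h.1
      have hxeq : x = 0 := by
        ext i; fin_cases i
        · exact hx0
        · exact hx1
      rw [hxeq]
      exact mem_closure_of_tendsto c_tendsto
        (Eventually.of_forall fun n => V_subset_interior n (c_mem_V n))
    · rcases mem_iUnion.mp h0 with ⟨n, hn⟩
      exact closure_mono (V_subset_interior n) (mem_closure_V x hx hn)
  · exact closure_minimal interior_subset K_closed


lemma eq_zero_of_coord0 {x : EuclideanSpace ℝ (Fin 2)} (hx : x ∈ K) (h0 : x 0 = 0) :
    x = 0 := by
  have h := hx.2
  rw [h0] at h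
  have hx1 : x 1 = 0 := by
    simpa using le_antisymm (by simpa using h.2) h.1
  ext i; fin_cases i
  · exact h0
  · exact hx1

lemma F_eventually {n : ℕ} {x : EuclideanSpace ℝ (Fin 2)} (hx0 : x 0 ∈ I' n) :
    F =ᶠ[𝓝 x] fun _ => a n := by
  have hJ : IsOpen ((fun y : EuclideanSpace ℝ (Fin 2) => y 0) ⁻¹' J n) :=
    isOpen_Ioo.preimage cont0
  filter_upwards [hJ.mem_nhds (I'_subset_J n hx0)] with y hy
  exact φ_eq hy

lemma abs_coord0_le (x : EuclideanSpace ℝ (Fin 2)) : |x 0| ≤ ‖x‖ := by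
  rw [EuclideanSpace.norm_eq, Fin.sum_univ_two, ← Real.sqrt_sq_eq_abs]
  apply Real.sqrt_le_sqrt
  have : ‖x 1‖ ^ 2 ≥ 0 := by positivity
  rw [Real.norm_eq_abs, Real.norm_eq_abs, sq_abs, sq_abs]
  nlinarith

lemma F_bound {y : EuclideanSpace ℝ (Fin 2)} (hy : y ∈ K) : |F y| ≤ ‖y‖ := by
  rcases hy.1 with h | h
  · simp only [mem_singleton_iff] at h
    have : F y = 0 := by
      show φ (y 0) = 0
      rw [h, φ_zero]
    rw [this]
    simpa using norm_nonneg y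
  · rcases mem_iUnion.mp h with ⟨n, hn⟩
    have hF : F y = a n := φ_eq (I'_subset_J n hn)
    rw [hF, abs_of_pos (a_pos n)]
    calc a n ≤ y 0 := hn.1
      _ ≤ |y 0| := le_abs_self _
      _ ≤ ‖y‖ := abs_coord0_le y

lemma F_zero : F 0 = 0 := by
  show φ ((0 : EuclideanSpace ℝ (Fin 2)) 0) = 0
  exact φ_zero

lemma F_contOn : ContinuousOn F K := by
  intro x hx
  rcases hx.1 with h | h
  · simp only [mem_singleton_iff] at h
    have hx0 : x = 0 := eq_zero_of_coord0 hx h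
    subst hx0
    have htend : Tendsto F (𝓝[K] 0) (𝓝 0) := by
      have hb : ∀ᶠ y in 𝓝[K] (0 : EuclideanSpace ℝ (Fin 2)), ‖F y‖ ≤ ‖y‖ := by
        filter_upwards [self_mem_nhdsWithin] with y hy
        simpa using F_bound hy
      have hg : Tendsto (fun y : EuclideanSpace ℝ (Fin 2) => ‖y‖) (𝓝[K] 0) (𝓝 0) := by
        have := (continuous_norm.tendsto (0 : EuclideanSpace ℝ (Fin 2))).mono_left
          (nhdsWithin_le_nhds (s := K))
        simpa using this
      exact squeeze_zero_norm' hb hg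
    rw [ContinuousWithinAt, F_zero]
    exact htend
  · rcases mem_iUnion.mp h with ⟨n, hn⟩
    exact ((F_eventually hn).continuousAt).continuousWithinAt

lemma zero_not_interior : (0 : EuclideanSpace ℝ (Fin 2)) ∉ interior K := by
  intro h
  rcases Metric.isOpen_iff.mp isOpen_interior 0 h with ⟨ε, hε, hball⟩
  set w : EuclideanSpace ℝ (Fin 2) := pt (-(ε/2)) 0 with hw
  have hwball : w ∈ Metric.ball (0 : EuclideanSpace ℝ (Fin 2)) ε := by
    rw [Metric.mem_ball, dist_zero_right, hw, pt_norm]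
    rw [show (-(ε/2))^2 + (0:ℝ)^2 = (ε/2)^2 by ring, Real.sqrt_sq (by linarith)]
    linarith
  have hwK : w ∈ K := interior_subset (hball hwball)
  have := C_nonneg hwK.1
  rw [hw, pt_apply0] at this
  linarith

lemma F_grad : ∀ x ∈ interior K, HasGradientAt F (0 : EuclideanSpace ℝ (Fin 2)) x := by
  intro x hx
  have hxK : x ∈ K := interior_subset hx
  rcases hxK.1 with h | h
  · simp only [mem_singleton_iff] at h
    rw [eq_zero_of_coord0 hxK h] at hx
    exact absurd hx zero_not_interior
  · rcases mem_iUnion.mp h with ⟨n, hn⟩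
    exact (hasGradientAt_const x (a n)).congr_of_eventuallyEq (F_eventually hn)

lemma a_mem_C (n : ℕ) : a n ∈ C :=
  Or.inr (mem_iUnion.mpr ⟨n, le_rfl, by linarith [a_pos n]⟩)

lemma two_a_mem_C (n : ℕ) : 2 * a n ∈ C :=
  Or.inr (mem_iUnion.mpr ⟨n, by linarith [a_pos n], le_rfl⟩)

lemma pt_mem_K {s : ℝ} (hs : s ∈ C) : pt s 0 ∈ K := by
  refine ⟨hs, le_rfl, ?_⟩
  rw [pt_apply1, pt_apply0]
  linarith [C_nonneg hs]

lemma pt_ne_zero {s : ℝ} (hs : 0 < s) : pt s 0 ≠ 0 := by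
  intro h
  have : pt s 0 0 = (0 : EuclideanSpace ℝ (Fin 2)) 0 := by rw [h]
  rw [pt_apply0] at this
  simp at this
  linarith

lemma pt_norm_pos {s : ℝ} (hs : 0 ≤ s) : ‖pt s 0‖ = s := by
  rw [pt_norm, show s^2 + (0:ℝ)^2 = s^2 by ring, Real.sqrt_sq hs]

lemma pt_inner (v : EuclideanSpace ℝ (Fin 2)) (s : ℝ) :
    (inner ℝ v (pt s 0) : ℝ) = v 0 * s := by
  simp [PiLp.inner_apply, RCLike.inner_apply, Fin.sum_univ_two, pt_apply0, pt_apply1, mul_comm]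

lemma pt_tendsto {u : ℕ → ℝ} (hu : Tendsto u atTop (𝓝 0)) (hpos : ∀ n, 0 ≤ u n) :
    Tendsto (fun n => pt (u n) 0) atTop (𝓝 (0 : EuclideanSpace ℝ (Fin 2))) := by
  rw [tendsto_iff_norm_sub_tendsto_zero]
  have heq : ∀ n, ‖pt (u n) 0 - 0‖ = u n := by
    intro n
    rw [sub_zero, pt_norm_pos (hpos n)]
  simp only [heq]
  exact hu

end SauterAux

open SauterAux in
/-- **Sauter's example.** There are a topologically regular compact set `K ⊆ ℝ²` and a
continuous `F : K → ℝ` differentiable with derivative `0` at every interior point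
(so `F ∈ C¹_int(K)`, the interior derivative extending continuously by `0`), while `F`
admits no continuous derivative on `K`; hence `C¹(K) ⊊ C¹_int(K)` is possible. -/
theorem sauter_example :
    ∃ (K : Set (EuclideanSpace ℝ (Fin 2))) (F : EuclideanSpace ℝ (Fin 2) → ℝ),
      IsCompact K ∧ K = closure (interior K) ∧ ContinuousOn F K ∧
      (∀ x ∈ interior K, HasGradientAt F (0 : EuclideanSpace ℝ (Fin 2)) x) ∧
      ¬ ∃ dF : EuclideanSpace ℝ (Fin 2) → EuclideanSpace ℝ (Fin 2),
          ContinuousOn dF K ∧ IsDerivOn K F dF := by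
  refine ⟨K, F, K_compact, K_regular, F_contOn, F_grad, ?_⟩
  rintro ⟨dF, -, hder⟩
  have h0 := hder 0 zero_mem_K
  set v : ℝ := dF 0 0 with hv
  -- first sequence : left endpoints
  have key : ∀ (b : ℝ), 0 < b → b ≤ 2 → (∀ n, b * a n ∈ C) → (∀ n, F (pt (b * a n) 0) = a n) →
      1 / b - v = 0 := by
    intro b hb hb2 hbC hbF
    have hmem : ∀ n, pt (b * a n) 0 ∈ K \ {0} := by
      intro n
      refine ⟨pt_mem_K (hbC n), ?_⟩
      simp only [mem_singleton_iff]
      exact pt_ne_zero (by nlinarith [a_pos n])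
    have htend : Tendsto (fun n => pt (b * a n) 0) atTop (𝓝[K \ {0}] 0) := by
      rw [tendsto_nhdsWithin_iff]
      constructor
      · apply pt_tendsto
        · have := a_tendsto.const_mul b
          simpa using this
        · intro n; nlinarith [a_pos n]
      · exact Eventually.of_forall hmem
    have hcomp := h0.comp htend
    have heq : ((fun y => (F y - F 0 - (inner ℝ (dF 0) (y - 0) : ℝ)) / ‖y - 0‖) ∘
        fun n => pt (b * a n) 0) = fun _ => 1 / b - v := by
      funext n
      have han := a_pos n
      simp only [Function.comp_apply, sub_zero]
      rw [hbF n, F_zero, pt_inner, pt_norm_pos (by nlinarith), ← hv]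
      field_simp
      ring
    rw [heq] at hcomp
    exact tendsto_nhds_unique tendsto_const_nhds hcomp
  have h1 : 1 / 1 - v = 0 := by
    apply key 1 one_pos (by norm_num)
    · intro n; rw [one_mul]; exact a_mem_C n
    · intro n
      rw [one_mul]
      show φ (a n) = a n
      exact φ_eq (I'_subset_J n ⟨le_rfl, by linarith [a_pos n]⟩)
  have h2 : 1 / 2 - v = 0 := by
    apply key 2 two_pos le_rfl
    · intro n; exact two_a_mem_C n
    · intro n
      show φ (2 * a n) = a n
      exact φ_eq (I'_subset_J n ⟨by linarith [a_pos n], le_rfl⟩)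
  rw [one_div_one] at h1
  linarith
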